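/- Let 𝔸 be an infinite type with decidable equality, fix a ∈ 𝔸, let φ be a proposition, and define ā := {x ∈ 𝔸 | (x = a ∧ φ) ∨ x ≠ a} ⊆ 𝔸, with finitary permutations acting on subsets of 𝔸 by direct image. Then π · ā = ā for every finitary permutation π if and only if φ holds. -/

import Mathlib

/-- The subgroup of finitary permutations of `𝔸`: permutations moving
only finitely many elements. -/
def FinPerm (𝔸 : Type*) : Subgroup (Equiv.Perm 𝔸) where
  carrier := {π : Equiv.Perm 𝔸 | {a | π a ≠ a}.Finite}
  one_mem' := by simp
  mul_mem' := by
    intro π σ hπ hσ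
    refine (hπ.union hσ).subset ?_
    intro a ha
    by_contra h
    simp only [Set.mem_union, Set.mem_setOf_eq, not_or, not_not] at h
    exact ha (by simp [Equiv.Perm.mul_apply, h.1, h.2])
  inv_mem' := by
    intro π hπ
    refine hπ.subset ?_
    intro a ha
    simp only [Set.mem_setOf_eq] at *
    intro h
    exact ha (by nth_rewrite 1 [← h]; first | exact Equiv.Perm.apply_inv_self π a | simp)

/-- `A` supports `x`: every finitary permutation fixing `A` pointwise fixes `x`. -/
def NSupports (𝔸 : Type*) {X : Type*} [MulAction (FinPerm 𝔸) X] (A : Set 𝔸) (x : X) : Prop :=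
  ∀ π : FinPerm 𝔸, (∀ a ∈ A, π.1 a = a) → π • x = x

theorem stmt_10 {𝔸 : Type*} [Infinite 𝔸] [DecidableEq 𝔸] (a : 𝔸) (φ : Prop) :
    (∀ π : FinPerm 𝔸, π.1 '' {x : 𝔸 | (x = a ∧ φ) ∨ x ≠ a} = {x : 𝔸 | (x = a ∧ φ) ∨ x ≠ a})
      ↔ φ := by
  constructor
  · intro h
    by_contra hφ
    have hset : {x : 𝔸 | (x = a ∧ φ) ∨ x ≠ a} = {a}ᶜ := by
      ext x; simp [hφ]
    obtain ⟨b, hb⟩ := exists_ne a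
    have hswap : Equiv.swap a b ∈ FinPerm 𝔸 := by
      refine Set.Finite.subset ((Set.finite_singleton b).insert a) ?_
      intro x hx
      simp only [Set.mem_setOf_eq] at hx
      by_contra hxm
      simp only [Set.mem_insert_iff, Set.mem_singleton_iff, not_or] at hxm
      exact hx (Equiv.swap_apply_of_ne_of_ne hxm.1 hxm.2)
    have := h ⟨Equiv.swap a b, hswap⟩
    rw [hset] at this
    have hbmem : b ∈ (Equiv.swap a b) '' ({a}ᶜ : Set 𝔸) := by
      rw [this]; simpa using hb
    obtain ⟨c, hc, hc2⟩ := hbmem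
    rcases eq_or_ne c b with rfl | hcb
    · simp at hc2; exact hc hc2.symm
    · rw [Equiv.swap_apply_of_ne_of_ne hc hcb] at hc2; exact hcb hc2
  · intro hφ π
    have : {x : 𝔸 | (x = a ∧ φ) ∨ x ≠ a} = Set.univ := by
      ext x; simp [hφ, em]
    rw [this, Set.image_univ, Equiv.range_eq_univ]
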